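/- Let M/E be a finite Galois extension and for each prime p dividing [M : E], let E_p be the fixed field of a Sylow p-subgroup of Gal(M/E). If an element α ∈ M* lies in the norm group N(M/E_p) for every prime p dividing [M : E], then α ∈ E* and α ∈ N(M/E). -/

import Mathlib

open IntermediateField

/-- Let M/E be finite Galois and for each prime p dividing [M : E] let E_p be
the fixed field of a Sylow p-subgroup of Gal(M/E). If α ∈ M* lies in the norm
group N(M/E_p) for every such p, then α lies in E* and α ∈ N(M/E). -/
theorem mem_norm_group_of_mem_sylow_norm_groups
    (E M : Type*) [Field E] [Field M] [Algebra E M]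
    [FiniteDimensional E M] [IsGalois E M]
    (S : ∀ p : ℕ, Sylow p (M ≃ₐ[E] M))
    (α : M) (hα : α ≠ 0)
    (h : ∀ p ∈ (Module.finrank E M).primeFactors,
      ∃ γ : M, algebraMap (fixedField (S p : Subgroup (M ≃ₐ[E] M))) M
        (Algebra.norm (fixedField (S p : Subgroup (M ≃ₐ[E] M))) γ) = α) :
    (∃ β : E, algebraMap E M β = α) ∧
      ∃ γ : M, algebraMap E M (Algebra.norm E γ) = α := by
  classical
  set n := Module.finrank E M with hn
  have hn0 : 0 < n := Module.finrank_pos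
  -- α is fixed by each Sylow subgroup
  have hfix : ∀ p ∈ n.primeFactors, α ∈ fixedField (S p : Subgroup (M ≃ₐ[E] M)) := by
    intro p hp
    obtain ⟨γ, hγ⟩ := h p hp
    rw [← hγ]
    exact (Algebra.norm (fixedField (S p : Subgroup (M ≃ₐ[E] M))) γ).2
  -- the stabilizer of α contains every Sylow subgroup, hence equals ⊤
  have hcardG : Nat.card (M ≃ₐ[E] M) = n := by
    have := IsGalois.card_aut_eq_finrank E M
    exact this
  set K : Subgroup (M ≃ₐ[E] M) := MulAction.stabilizer (M ≃ₐ[E] M) α with hK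
  have hle : ∀ p ∈ n.primeFactors, (S p : Subgroup (M ≃ₐ[E] M)) ≤ K := by
    intro p hp σ hσ
    exact hfix p hp ⟨σ, hσ⟩
  have hKtop : K = ⊤ := by
    have hdvd : n ∣ Nat.card K := by
      rw [← Nat.factorization_le_iff_dvd hn0.ne' Nat.card_pos.ne']
      intro p
      by_cases hp : p ∈ n.primeFactors
      · haveI : Fact p.Prime := ⟨Nat.prime_of_mem_primeFactors hp⟩
        have h1 : p ^ n.factorization p ∣ Nat.card K := by
          have := Subgroup.card_dvd_of_le (hle p hp)
          rwa [(S p).card_eq_multiplicity, hcardG] at this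
        exact (Nat.Prime.pow_dvd_iff_le_factorization (Fact.out) Nat.card_pos.ne').mp h1
      · have : n.factorization p = 0 := by
          rwa [← Nat.support_factorization, Finsupp.notMem_support_iff] at hp
        simp [this]
    have := Subgroup.card_subgroup_dvd_card K
    rw [hcardG] at this
    exact Subgroup.eq_top_of_card_eq K (by rw [hcardG]; exact Nat.dvd_antisymm this hdvd)
  -- hence α is in the bottom field
  have hbot : α ∈ (⊥ : IntermediateField E M) := by
    rw [← IsGalois.fixedField_fixingSubgroup (⊥ : IntermediateField E M)]
    intro σ
    have : (σ : M ≃ₐ[E] M) ∈ K := hKtop ▸ Subgroup.mem_top _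
    exact this
  obtain ⟨β, hβ⟩ := IntermediateField.mem_bot.mp hbot
  refine ⟨⟨β, hβ⟩, ?_⟩
  have hβ0 : β ≠ 0 := by rintro rfl; simp at hβ; exact hα hβ.symm
  -- the additive subgroup of exponents k with α ^ k a norm
  set T : AddSubgroup ℤ :=
    { carrier := {k : ℤ | ∃ γ : M, algebraMap E M (Algebra.norm E γ) = α ^ k}
      zero_mem' := ⟨1, by simp⟩
      add_mem' := by
        rintro a b ⟨γ₁, h1⟩ ⟨γ₂, h2⟩
        exact ⟨γ₁ * γ₂, by rw [map_mul, map_mul, h1, h2, zpow_add₀ hα]⟩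
      neg_mem' := by
        rintro a ⟨γ, hγ⟩
        have hγ0 : γ ≠ 0 := by
          rintro rfl
          rw [Algebra.norm_zero, map_zero] at hγ
          exact (zpow_ne_zero a hα) hγ.symm
        refine ⟨γ⁻¹, ?_⟩
        have : Algebra.norm E γ⁻¹ = (Algebra.norm E γ)⁻¹ := by
          apply eq_inv_of_mul_eq_one_left
          rw [← map_mul, inv_mul_cancel₀ hγ0, map_one]
        rw [this, map_inv₀, hγ, ← zpow_neg] } with hT
  -- each relative degree [E_p : E] lies in T
  have hd : ∀ p ∈ n.primeFactors,
      ((Module.finrank E (fixedField (S p : Subgroup (M ≃ₐ[E] M))) : ℤ)) ∈ T := by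
    intro p hp
    obtain ⟨γ, hγ⟩ := h p hp
    set Ep := fixedField (S p : Subgroup (M ≃ₐ[E] M)) with hEp
    refine ⟨γ, ?_⟩
    have htrans : Algebra.norm E γ = Algebra.norm E (Algebra.norm Ep γ) :=
      (Algebra.norm_norm (R := E) (S := Ep) (a := γ)).symm
    have hnorm_eq : Algebra.norm Ep γ = algebraMap E Ep β := by
      apply Subtype.ext
      have : (algebraMap Ep M) (algebraMap E Ep β) = algebraMap E M β :=
        (IsScalarTower.algebraMap_apply E Ep M β).symm
      rw [show ((Algebra.norm Ep γ : Ep) : M) = algebraMap Ep M (Algebra.norm Ep γ) from rfl, hγ]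
      rw [show ((algebraMap E Ep β : Ep) : M) = algebraMap Ep M (algebraMap E Ep β) from rfl, this,
        hβ]
    rw [htrans, hnorm_eq, Algebra.norm_algebraMap, map_pow, hβ, zpow_natCast]
  -- T is cyclic; show its generator divides all the coprime degrees, hence 1 ∈ T
  obtain ⟨g, hg⟩ := Int.subgroup_cyclic T
  -- each degree d_p is coprime to p and divides n
  have hdp : ∀ p ∈ n.primeFactors,
      ¬ (p ∣ Module.finrank E (fixedField (S p : Subgroup (M ≃ₐ[E] M)))) ∧
        Module.finrank E (fixedField (S p : Subgroup (M ≃ₐ[E] M))) ∣ n := by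
    intro p hp
    haveI : Fact p.Prime := ⟨Nat.prime_of_mem_primeFactors hp⟩
    set Ep := fixedField (S p : Subgroup (M ≃ₐ[E] M)) with hEp
    have hmul : Module.finrank E Ep * Module.finrank Ep M = n := Module.finrank_mul_finrank E Ep M
    have hcard : Module.finrank Ep M = p ^ n.factorization p := by
      have h1 := IntermediateField.finrank_fixedField_eq_card
        (F := E) (E := M) ((S p : Subgroup (M ≃ₐ[E] M)))
      rw [(S p).card_eq_multiplicity, hcardG] at h1
      exact h1
    constructor
    · intro hdvd
      obtain ⟨c, hc⟩ := hdvd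
      rw [hc, hcard] at hmul
      have : p ^ (n.factorization p + 1) ∣ n := by
        refine ⟨c, ?_⟩
        nth_rewrite 1 [← hmul]
        rw [pow_succ]; ring
      exact Nat.pow_succ_factorization_not_dvd hn0.ne' Fact.out this
    · exact ⟨_, hmul.symm⟩
  have hone : (1 : ℤ) ∈ T := by
    by_cases hn1 : n = 1
    · -- trivial extension: primeFactors is empty, but then M = E
      refine ⟨α, ?_⟩
      rw [← hβ, Algebra.norm_algebraMap, ← hn, hn1, pow_one, hβ, zpow_one]
    · -- n has a prime factor, T contains coprime degrees so g = ±1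
      obtain ⟨p₀, hp₀⟩ : ∃ p, p ∈ n.primeFactors := by
        obtain ⟨p, hp, hpd⟩ := Nat.exists_prime_and_dvd hn1
        exact ⟨p, Nat.mem_primeFactors.mpr ⟨hp, hpd, hn0.ne'⟩⟩
      have hgdvd : ∀ p ∈ n.primeFactors,
          g ∣ (Module.finrank E (fixedField (S p : Subgroup (M ≃ₐ[E] M))) : ℤ) := by
        intro p hp
        have := hd p hp
        rw [hg, ← AddSubgroup.zmultiples_eq_closure, AddSubgroup.mem_zmultiples_iff] at this
        obtain ⟨k, hk⟩ := this
        exact ⟨k, by rw [← hk, smul_eq_mul, mul_comm]⟩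
      have hgabs : g.natAbs = 1 := by
        by_contra hg1
        have hg0 : g ≠ 0 := by
          rintro rfl
          have := hgdvd p₀ hp₀
          rw [zero_dvd_iff, Int.natCast_eq_zero] at this
          have : 0 < Module.finrank E (fixedField (S p₀ : Subgroup (M ≃ₐ[E] M))) :=
            Module.finrank_pos
          omega
        set q := g.natAbs.minFac with hq
        have hqprime : q.Prime := Nat.minFac_prime hg1
        have hqdvd : ∀ p ∈ n.primeFactors,
            q ∣ Module.finrank E (fixedField (S p : Subgroup (M ≃ₐ[E] M))) := by
          intro p hp
          have h1 : (q : ℤ) ∣ g :=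
            (Int.natCast_dvd_natCast.mpr g.natAbs.minFac_dvd).trans (Int.natAbs_dvd.mpr dvd_rfl)
          exact_mod_cast h1.trans (hgdvd p hp)
        have hqn : q ∈ n.primeFactors :=
          Nat.mem_primeFactors.mpr ⟨hqprime, (hqdvd p₀ hp₀).trans (hdp p₀ hp₀).2, hn0.ne'⟩
        exact (hdp q hqn).1 (hqdvd q hqn)
      have : (1 : ℤ) ∈ AddSubgroup.closure ({g} : Set ℤ) := by
        rw [← AddSubgroup.zmultiples_eq_closure, AddSubgroup.mem_zmultiples_iff]
        rcases Int.natAbs_eq g with h' | h' <;> rw [hgabs] at h'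
        · exact ⟨1, by simp [h']⟩
        · exact ⟨-1, by simp [h']⟩
      rw [hg]
      exact this
  obtain ⟨γ, hγ⟩ := hone
  exact ⟨γ, by rwa [zpow_one] at hγ⟩
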